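/- Let G be a finite simple graph on a vertex set of n ≥ 2 elements, and let d₁ ≤ d₂ ≤ … ≤ d_n be its vertex degrees sorted in ascending order. For a permutation π of the vertex set, let P(π) denote the set of ordered pairs (u, v) of distinct vertices with π(u) < π(v) for which there exists a vertex w adjacent to both u and v such that no vertex x adjacent to w satisfies π(u) < π(x) < π(v). Then for every index t ∈ {1, …, n} with d_t ≥ 1, the average of |P(π)| over all n! permutations π is at most 4n + 2·(d₁ + d₂ + … + d_{t−1}) + (n − t) · n · ln(n) / d_t. -/

import Mathlib

/-- `P(π)`: the set of ordered pairs `(u, v)` of distinct vertices with `π u < π v`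
such that some common neighbor `w` of `u` and `v` has no neighbor `x` with
`π u < π x < π v`. -/
def Ppairs {V : Type*} (G : SimpleGraph V) {n : ℕ} (π : V ≃ Fin n) : Set (V × V) :=
  {p | p.1 ≠ p.2 ∧ π p.1 < π p.2 ∧
    ∃ w : V, G.Adj w p.1 ∧ G.Adj w p.2 ∧
      ∀ x : V, G.Adj w x → ¬(π p.1 < π x ∧ π x < π p.2)}

open Finset

def EvP {V : Type*} (G : SimpleGraph V) {n : ℕ} (π : V ≃ Fin n) (L : ℕ) (u w : V) : Prop :=
  ((π u : ℕ) + L + 1 ≤ n) ∧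
    ∀ x : V, G.Adj w x → ¬((π u : ℕ) < (π x : ℕ) ∧ (π x : ℕ) ≤ (π u : ℕ) + L)

instance {V : Type*} [Fintype V] (G : SimpleGraph V) [DecidableRel G.Adj] {n : ℕ}
    (π : V ≃ Fin n) (L : ℕ) (u w : V) : Decidable (EvP G π L u w) := by
  unfold EvP; infer_instance


lemma dF_ratio (a b : ℕ) (h : a ≤ b) : ∀ k : ℕ,
    a.descFactorial k * b ^ k ≤ b.descFactorial k * a ^ k
  | 0 => by simp
  | (k + 1) => by
    rw [Nat.descFactorial_succ, Nat.descFactorial_succ, pow_succ, pow_succ]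
    have h1 : (a - k) * b ≤ (b - k) * a := by
      rcases le_or_gt k a with hka | hka
      · calc (a - k) * b = a * b - k * b := by rw [Nat.sub_mul]
          _ ≤ b * a - k * a := by
              rw [mul_comm a b]
              exact Nat.sub_le_sub_left (Nat.mul_le_mul_left k h) _
          _ = (b - k) * a := by rw [Nat.sub_mul]
      · simp [Nat.sub_eq_zero_of_le hka.le]
    calc (a - k) * a.descFactorial k * (b ^ k * b)
        = ((a - k) * b) * (a.descFactorial k * b ^ k) := by ring
      _ ≤ ((b - k) * a) * (b.descFactorial k * a ^ k) :=
          Nat.mul_le_mul h1 (dF_ratio a b h k)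
      _ = (b - k) * b.descFactorial k * (a ^ k * a) := by ring

lemma e_log_le (n : ℕ) (hn : 1 ≤ n) : Real.exp 1 * Real.log n ≤ n := by
  have hnpos : (0:ℝ) < n := by exact_mod_cast hn
  have hx : (0:ℝ) < (n:ℝ) / Real.exp 1 := by positivity
  have h1 := Real.log_le_sub_one_of_pos hx
  rw [Real.log_div (ne_of_gt hnpos) (Real.exp_ne_zero 1), Real.log_exp] at h1
  have h2 : Real.log n ≤ (n:ℝ) / Real.exp 1 := by linarith
  calc Real.exp 1 * Real.log n ≤ Real.exp 1 * ((n:ℝ) / Real.exp 1) := by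
        exact mul_le_mul_of_nonneg_left h2 (Real.exp_pos 1).le
    _ = n := by field_simp

set_option maxHeartbeats 1000000 in
lemma key_real (n D d L : ℕ) (hn2 : 2 ≤ n) (hD1 : 1 ≤ D) (hDd : D ≤ d) (hdn : d ≤ n - 1)
    (hLlb : ((n:ℝ) - 1) * Real.log n / D ≤ L)
    (hB : (n:ℝ) * Real.log n / D < (n:ℝ) - 1) (hLn : L ≤ n - 1) :
    (d:ℝ) * (((n - 1 - L : ℕ) : ℝ) / ((n - 1 : ℕ) : ℝ)) ^ (d - 1) ≤ 2 := by
  have e1 : ((n - 1 : ℕ) : ℝ) = (n:ℝ) - 1 := by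
    rw [Nat.cast_sub (by omega)]; norm_num
  have e2 : ((n - 1 - L : ℕ) : ℝ) = (n:ℝ) - 1 - L := by
    rw [Nat.cast_sub hLn, e1]
  have hn1R : (0:ℝ) < ((n - 1:ℕ):ℝ) := by
    rw [e1]
    have : (2:ℝ) ≤ n := by exact_mod_cast hn2
    linarith
  have hDR : (0:ℝ) < (D:ℝ) := by exact_mod_cast hD1
  have hnR : (0:ℝ) < (n:ℝ) := by positivity
  have hlogpos : 0 < Real.log n := Real.log_pos (by exact_mod_cast hn2)
  have hbase : (((n - 1 - L : ℕ) : ℝ) / ((n - 1 : ℕ) : ℝ)) = 1 - (L:ℝ) / ((n-1:ℕ):ℝ) := by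
    rw [e1, e2, sub_div, div_self (by linarith : (n:ℝ) - 1 ≠ 0)]
  have hLfrac : (L:ℝ) / ((n-1:ℕ):ℝ) ≤ 1 := by
    rw [div_le_one hn1R]
    exact_mod_cast hLn
  have hexp1 : (((n - 1 - L : ℕ) : ℝ) / ((n - 1 : ℕ) : ℝ)) ≤ Real.exp (-((L:ℝ) / ((n-1:ℕ):ℝ))) := by
    rw [hbase]
    have := Real.add_one_le_exp (-((L:ℝ) / ((n-1:ℕ):ℝ)))
    linarith
  have hbasenn : 0 ≤ (((n - 1 - L : ℕ) : ℝ) / ((n - 1 : ℕ) : ℝ)) := by positivity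
  have hpow : (((n - 1 - L : ℕ) : ℝ) / ((n - 1 : ℕ) : ℝ)) ^ (d-1)
      ≤ Real.exp (-((d-1:ℕ) * ((L:ℝ) / ((n-1:ℕ):ℝ)))) := by
    calc (((n - 1 - L : ℕ) : ℝ) / ((n - 1 : ℕ) : ℝ)) ^ (d-1)
        ≤ (Real.exp (-((L:ℝ) / ((n-1:ℕ):ℝ)))) ^ (d-1) := pow_le_pow_left₀ hbasenn hexp1 _
      _ = Real.exp (-((d-1:ℕ) * ((L:ℝ) / ((n-1:ℕ):ℝ)))) := by
          rw [← Real.exp_nat_mul]; ring_nf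
  have hrate : Real.log n / D ≤ (L:ℝ) / ((n-1:ℕ):ℝ) := by
    rw [div_le_div_iff₀ hDR hn1R, e1]
    calc Real.log n * ((n:ℝ) - 1) = (((n:ℝ)-1) * Real.log n / D) * D := by field_simp
      _ ≤ (L:ℝ) * D := mul_le_mul_of_nonneg_right hLlb hDR.le
  have hpow2 : (((n - 1 - L : ℕ) : ℝ) / ((n - 1 : ℕ) : ℝ)) ^ (d-1)
      ≤ Real.exp (-((d-1:ℕ) * (Real.log n / D))) := by
    refine hpow.trans ?_
    apply Real.exp_le_exp.mpr
    have hd1 : (0:ℝ) ≤ ((d-1:ℕ):ℝ) := by positivity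
    nlinarith [mul_le_mul_of_nonneg_left hrate hd1]
  rcases le_or_gt D (d - 1) with hc | hc
  · have h3 : Real.log n ≤ ((d-1:ℕ):ℝ) * (Real.log n / D) := by
      have hDc : (D:ℝ) ≤ ((d-1:ℕ):ℝ) := by exact_mod_cast hc
      calc Real.log n = (D:ℝ) * (Real.log n / D) := by field_simp
        _ ≤ ((d-1:ℕ):ℝ) * (Real.log n / D) :=
            mul_le_mul_of_nonneg_right hDc (by positivity)
    have h4 : Real.exp (-((d-1:ℕ) * (Real.log n / D))) ≤ Real.exp (-(Real.log n)) :=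
      Real.exp_le_exp.mpr (by linarith)
    have h5 : Real.exp (-(Real.log n)) = ((n:ℝ))⁻¹ := by
      rw [Real.exp_neg, Real.exp_log hnR]
    have h6 : (d:ℝ) ≤ (n:ℝ) := by
      have : d ≤ n := le_trans hdn (Nat.sub_le n 1)
      exact_mod_cast this
    calc (d:ℝ) * (((n - 1 - L : ℕ) : ℝ) / ((n - 1 : ℕ) : ℝ)) ^ (d - 1)
        ≤ (d:ℝ) * ((n:ℝ))⁻¹ := by
          apply mul_le_mul_of_nonneg_left _ (by positivity)
          rw [← h5]
          exact hpow2.trans h4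
      _ ≤ 1 := by rw [mul_inv_le_iff₀ hnR]; linarith
      _ ≤ 2 := by norm_num
  · -- d = D case
    have hdD : d = D := by omega
    subst hdD
    obtain ⟨x, hxdef⟩ : ∃ x : ℝ, x = Real.log n / d := ⟨_, rfl⟩
    rw [← hxdef] at hpow2
    have hxpos : 0 < x := by rw [hxdef]; positivity
    have hdx : (d:ℝ) * x = Real.log n := by
      rw [hxdef]; field_simp
    have hnx : (n:ℝ) * x < (n:ℝ) - 1 := by
      calc (n:ℝ) * x = (n:ℝ) * Real.log n / d := by rw [hxdef]; ring
        _ < (n:ℝ) - 1 := hB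
    have hx1 : x < 1 := by nlinarith
    have hcast : ((d-1:ℕ):ℝ) = (d:ℝ) - 1 := by
      rw [Nat.cast_sub (by omega)]; norm_num
    have hexpand : Real.exp (-((d-1:ℕ) * x)) = Real.exp x / n := by
      rw [hcast]
      have : -(((d:ℝ) - 1) * x) = x - (d:ℝ) * x := by ring
      rw [this, hdx, Real.exp_sub, Real.exp_log hnR]
    have hkey : (d:ℝ) * (Real.exp x / n) ≤ 2 := by
      rcases le_or_gt x (1/2) with hxh | hxh
      · have hexpx : Real.exp x ≤ 2 := by
          have hlow : (1:ℝ)/2 ≤ Real.exp (-x) := by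
            have := Real.add_one_le_exp (-x)
            linarith
          have hprod : Real.exp x * Real.exp (-x) = 1 := by
            rw [← Real.exp_add]; simp
          nlinarith [Real.exp_pos x]
        have hdn' : (d:ℝ) ≤ n := by
          have : d ≤ n := le_trans hdn (Nat.sub_le n 1)
          exact_mod_cast this
        calc (d:ℝ) * (Real.exp x / n) ≤ (d:ℝ) * (2 / n) := by gcongr
          _ = (d:ℝ) * 2 / n := by ring
          _ ≤ 2 := by rw [div_le_iff₀ hnR]; linarith
      · have hd2 : (d:ℝ) < 2 * Real.log n := by
          have : (d:ℝ) * x = Real.log n := hdx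
          nlinarith
        have hexpx : Real.exp x ≤ Real.exp 1 := Real.exp_le_exp.mpr hx1.le
        have helog := e_log_le n (by omega)
        calc (d:ℝ) * (Real.exp x / n) ≤ (2 * Real.log n) * (Real.exp 1 / n) := by
              apply mul_le_mul hd2.le _ (by positivity) (by positivity)
              gcongr
          _ = 2 * (Real.exp 1 * Real.log n) / n := by ring
          _ ≤ 2 * n / n := by gcongr
          _ = 2 := by field_simp
    calc (d:ℝ) * (((n - 1 - L : ℕ) : ℝ) / ((n - 1 : ℕ) : ℝ)) ^ (d - 1)
        ≤ (d:ℝ) * Real.exp (-((d-1:ℕ) * x)) := by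
          apply mul_le_mul_of_nonneg_left _ (by positivity)
          exact hpow2
      _ = (d:ℝ) * (Real.exp x / n) := by rw [hexpand]
      _ ≤ 2 := hkey

lemma ceil_le_pred (n D : ℕ) (hn2 : 2 ≤ n) (hD1 : 1 ≤ D)
    (hB : (n:ℝ) * Real.log n / D < (n:ℝ) - 1) :
    Nat.ceil (((n:ℝ) - 1) * Real.log n / D) ≤ n - 1 := by
  have hDR : (0:ℝ) < (D:ℝ) := by exact_mod_cast hD1
  have hnR : (0:ℝ) < (n:ℝ) := by positivity
  have hlognn : 0 ≤ Real.log n := Real.log_natCast_nonneg n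
  rw [Nat.ceil_le]
  have e1 : ((n - 1 : ℕ) : ℝ) = (n:ℝ) - 1 := by
    rw [Nat.cast_sub (by omega)]; norm_num
  rw [e1]
  have h1 : ((n:ℝ) - 1) * Real.log n / D = (((n:ℝ)) * Real.log n / D) * (((n:ℝ)-1)/n) := by
    field_simp
  rw [h1]
  have h2 : ((n:ℝ)-1)/n ≤ 1 := by
    rw [div_le_one hnR]; linarith
  have h3 : 0 ≤ (n:ℝ) * Real.log n / D := by positivity
  have h4 : 0 ≤ ((n:ℝ)-1)/n := by
    apply div_nonneg _ hnR.le
    have : (2:ℝ) ≤ n := by exact_mod_cast hn2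
    linarith
  calc ((n:ℝ) * Real.log n / D) * (((n:ℝ)-1)/n) ≤ ((n:ℝ)-1) * 1 := by
        apply mul_le_mul hB.le h2 h4
        have : (2:ℝ) ≤ n := by exact_mod_cast hn2
        linarith
    _ = (n:ℝ) - 1 := by ring

lemma aux_real (n dg D L : ℕ) (hn2 : 2 ≤ n) (hD1 : 1 ≤ D) (hDd : D ≤ dg) (hdn : dg ≤ n - 1)
    (hB : (n:ℝ) * Real.log n / D < (n:ℝ) - 1)
    (hL : L = Nat.ceil (((n:ℝ) - 1) * Real.log n / D)) :
    (dg:ℝ) * ((n * Nat.descFactorial (n - 1 - L) (dg - 1) * Nat.factorial (n - dg) : ℕ) : ℝ)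
      ≤ 2 * (Nat.factorial n : ℝ) := by
  have hDR : (0:ℝ) < (D:ℝ) := by exact_mod_cast hD1
  have hLn : L ≤ n - 1 := hL ▸ ceil_le_pred n D hn2 hD1 hB
  have hLlb : ((n:ℝ) - 1) * Real.log n / D ≤ L := hL ▸ Nat.le_ceil _
  -- factorial identity
  have hfact : Nat.factorial n = n * (Nat.factorial (n - dg) * Nat.descFactorial (n-1) (dg-1)) := by
    have h1 : Nat.factorial (n - 1 - (dg - 1)) * Nat.descFactorial (n-1) (dg-1)
        = Nat.factorial (n-1) := Nat.factorial_mul_descFactorial (by omega)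
    have h2 : n - 1 - (dg - 1) = n - dg := by omega
    rw [h2] at h1
    rw [h1]
    exact (Nat.mul_factorial_pred (by omega)).symm
  -- ratio bound
  have hratio := dF_ratio (n - 1 - L) (n - 1) (by omega) (dg - 1)
  have hn1R : (0:ℝ) < ((n-1:ℕ):ℝ) := by
    have : 1 ≤ n - 1 := by omega
    exact_mod_cast Nat.lt_of_lt_of_le Nat.zero_lt_one this
  have hratioR : ((Nat.descFactorial (n - 1 - L) (dg - 1) : ℕ) : ℝ)
      ≤ (Nat.descFactorial (n-1) (dg-1) : ℝ) * (((n - 1 - L : ℕ) : ℝ) / ((n - 1 : ℕ) : ℝ)) ^ (dg - 1) := by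
    have hcast : ((Nat.descFactorial (n - 1 - L) (dg - 1) * (n-1) ^ (dg-1) : ℕ) : ℝ)
        ≤ ((Nat.descFactorial (n-1) (dg-1) * (n-1-L) ^ (dg-1) : ℕ) : ℝ) := by
      exact_mod_cast hratio
    push_cast at hcast
    rw [div_pow, ← mul_div_assoc]
    rw [le_div_iff₀ (by positivity : (0:ℝ) < (((n-1:ℕ)):ℝ) ^ (dg-1))]
    exact hcast
  have hkey := key_real n D dg L hn2 hD1 hDd hdn hLlb hB hLn
  -- combine
  have hmain : (dg:ℝ) * (Nat.descFactorial (n - 1 - L) (dg - 1) : ℝ)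
      ≤ 2 * (Nat.descFactorial (n-1) (dg-1) : ℝ) := by
    calc (dg:ℝ) * (Nat.descFactorial (n - 1 - L) (dg - 1) : ℝ)
        ≤ (dg:ℝ) * ((Nat.descFactorial (n-1) (dg-1) : ℝ)
            * (((n - 1 - L : ℕ) : ℝ) / ((n - 1 : ℕ) : ℝ)) ^ (dg - 1)) := by
          apply mul_le_mul_of_nonneg_left hratioR (by positivity)
      _ = (Nat.descFactorial (n-1) (dg-1) : ℝ)
            * ((dg:ℝ) * (((n - 1 - L : ℕ) : ℝ) / ((n - 1 : ℕ) : ℝ)) ^ (dg - 1)) := by ring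
      _ ≤ (Nat.descFactorial (n-1) (dg-1) : ℝ) * 2 := by
          apply mul_le_mul_of_nonneg_left hkey (by positivity)
      _ = 2 * (Nat.descFactorial (n-1) (dg-1) : ℝ) := by ring
  rw [hfact]
  push_cast
  calc (dg:ℝ) * ((n:ℝ) * (Nat.descFactorial (n - 1 - L) (dg - 1) : ℝ) * (Nat.factorial (n - dg) : ℝ))
      = ((n:ℝ) * (Nat.factorial (n - dg) : ℝ))
          * ((dg:ℝ) * (Nat.descFactorial (n - 1 - L) (dg - 1) : ℝ)) := by ring
    _ ≤ ((n:ℝ) * (Nat.factorial (n - dg) : ℝ)) * (2 * (Nat.descFactorial (n-1) (dg-1) : ℝ)) := by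
        apply mul_le_mul_of_nonneg_left hmain (by positivity)
    _ = 2 * ((n:ℝ) * ((Nat.factorial (n - dg) : ℝ) * (Nat.descFactorial (n-1) (dg-1) : ℝ))) := by
        ring


lemma card_fix {V : Type*} [Fintype V] [DecidableEq V] {n : ℕ} (hn : n = Fintype.card V)
    (A : Finset V) (tv : V → Fin n) :
    (Finset.univ.filter fun π : V ≃ Fin n => ∀ x ∈ A, π x = tv x).card ≤ Nat.factorial (n - A.card) := by
  rcases (Finset.univ.filter fun π : V ≃ Fin n => ∀ x ∈ A, π x = tv x).eq_empty_or_nonempty with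
    he | ⟨π₀, hπ₀⟩
  · simp [he]
  have hπ₀' : ∀ x ∈ A, π₀ x = tv x := (Finset.mem_filter.mp hπ₀).2
  have hinj : Set.InjOn tv A := by
    intro a ha b hb hab
    apply π₀.injective
    rw [hπ₀' a ha, hπ₀' b hb, hab]
  set Ac := (Finset.univ : Finset V) \ A with hAcdef
  set B := (Finset.univ : Finset (Fin n)) \ A.image tv with hBdef
  have hAc : Ac.card = n - A.card := by
    rw [hAcdef, Finset.card_sdiff_of_subset (Finset.subset_univ A), Finset.card_univ, hn]
  have hBc : B.card = n - A.card := by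
    rw [hBdef, Finset.card_sdiff_of_subset (Finset.subset_univ _), Finset.card_univ, Fintype.card_fin,
      Finset.card_image_of_injOn hinj]
  have hmemB : ∀ (π : V ≃ Fin n), (∀ x ∈ A, π x = tv x) → ∀ x : ↥Ac, π x.1 ∈ B := by
    intro π hπ x
    rw [hBdef, Finset.mem_sdiff]
    refine ⟨Finset.mem_univ _, ?_⟩
    intro hmem
    obtain ⟨a, ha, hav⟩ := Finset.mem_image.mp hmem
    have hxa : a = x.1 := π.injective ((hπ a ha).trans hav)
    have hx2 := Finset.mem_sdiff.mp x.2
    exact hx2.2 (hxa ▸ ha)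
  set F : (V ≃ Fin n) → (↥Ac ↪ ↥B) := fun π =>
    if h : (∀ x ∈ A, π x = tv x) then
      ⟨fun x => ⟨π x.1, hmemB π h x⟩, by
        intro a b hab
        exact Subtype.ext (π.injective (congrArg Subtype.val hab))⟩
    else
      ⟨fun x => ⟨π₀ x.1, hmemB π₀ hπ₀' x⟩, by
        intro a b hab
        exact Subtype.ext (π₀.injective (congrArg Subtype.val hab))⟩
    with hFdef
  have hinjOn : Set.InjOn F ↑(Finset.univ.filter fun π : V ≃ Fin n => ∀ x ∈ A, π x = tv x) := by
    intro π hπ π' hπ' hFF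
    rw [Finset.mem_coe, Finset.mem_filter] at hπ hπ'
    simp only [hFdef] at hFF
    rw [dif_pos hπ.2, dif_pos hπ'.2] at hFF
    have h2 : ∀ x : ↥Ac, π x.1 = π' x.1 := by
      intro x
      have := DFunLike.congr_fun hFF x
      exact congrArg Subtype.val this
    apply Equiv.ext
    intro x
    by_cases hx : x ∈ A
    · rw [hπ.2 x hx, hπ'.2 x hx]
    · exact h2 ⟨x, Finset.mem_sdiff.mpr ⟨Finset.mem_univ x, hx⟩⟩
  have hcard := Finset.card_le_card_of_injOn
    (s := Finset.univ.filter fun π : V ≃ Fin n => ∀ x ∈ A, π x = tv x)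
    (t := (Finset.univ : Finset (↥Ac ↪ ↥B))) F (fun π _ => Finset.mem_univ (F π)) hinjOn
  refine hcard.trans ?_
  rw [Finset.card_univ, Fintype.card_embedding_eq, Fintype.card_coe, Fintype.card_coe,
    hAc, hBc, Nat.descFactorial_self]

lemma card_Ev {V : Type*} [Fintype V] [DecidableEq V] {n : ℕ} (hn : n = Fintype.card V)
    (G : SimpleGraph V) [DecidableRel G.Adj] (L : ℕ) (u w : V) (huw : G.Adj w u) :
    (Finset.univ.filter fun π : V ≃ Fin n => EvP G π L u w).card
      ≤ n * Nat.descFactorial (n - 1 - L) ((Finset.univ.filter (G.Adj w ·)).card - 1)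
          * Nat.factorial (n - (Finset.univ.filter (G.Adj w ·)).card) := by
  set dg := (Finset.univ.filter (G.Adj w ·)).card with hdgdef
  set S : Finset V := (Finset.univ.filter (G.Adj w ·)).erase u with hSdef
  have huN : u ∈ Finset.univ.filter (G.Adj w ·) := Finset.mem_filter.mpr ⟨Finset.mem_univ u, huw⟩
  have hScard : S.card = dg - 1 := by rw [hSdef, Finset.card_erase_of_mem huN]
  have hSmem : ∀ x : V, x ∈ S → G.Adj w x ∧ x ≠ u := by
    intro x hx
    rw [hSdef, Finset.mem_erase, Finset.mem_filter] at hx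
    exact ⟨hx.2.2, hx.1⟩
  have huS : u ∉ S := Finset.notMem_erase u _
  -- the fiber map
  set Φ : (V ≃ Fin n) → (Fin n × (↥S → Fin n)) := fun π => (π u, fun s => π s.1) with hΦdef
  set good : (Fin n × (↥S → Fin n)) → Prop := fun r =>
    ((r.1 : ℕ) + L + 1 ≤ n) ∧ Function.Injective r.2 ∧
      ∀ s : ↥S, ¬((r.1 : ℕ) ≤ (r.2 s : ℕ) ∧ (r.2 s : ℕ) ≤ (r.1 : ℕ) + L) with hgooddef
  set R : Finset (Fin n × (↥S → Fin n)) := Finset.univ.filter good with hRdef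
  have step1 : ∀ π ∈ (Finset.univ.filter fun π : V ≃ Fin n => EvP G π L u w), Φ π ∈ R := by
    intro π hπ
    rw [Finset.mem_filter] at hπ
    obtain ⟨-, hEv1, hEv2⟩ := hπ
    rw [hRdef, Finset.mem_filter]
    refine ⟨Finset.mem_univ _, hEv1, ?_, ?_⟩
    · intro a b hab
      exact Subtype.ext (π.injective hab)
    · intro s ⟨hle, hle2⟩
      obtain ⟨hadj, hne⟩ := hSmem s.1 s.2
      rcases Nat.lt_or_ge (π u : ℕ) (π s.1 : ℕ) with hlt | hge
      · exact hEv2 s.1 hadj ⟨hlt, hle2⟩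
      · have : (π s.1 : ℕ) = (π u : ℕ) := le_antisymm hge hle
        exact hne (π.injective (Fin.ext this))
  have step2 := Finset.card_eq_sum_card_fiberwise step1
  -- per fiber bound
  have step3 : ∀ r ∈ R,
      ((Finset.univ.filter fun π : V ≃ Fin n => EvP G π L u w).filter fun π => Φ π = r).card
        ≤ Nat.factorial (n - dg) := by
    intro r _
    set tv : V → Fin n := fun x => if hx : x ∈ S then r.2 ⟨x, hx⟩ else r.1 with htvdef
    have hsub : ((Finset.univ.filter fun π : V ≃ Fin n => EvP G π L u w).filter
        fun π => Φ π = r) ⊆ (Finset.univ.filter fun π : V ≃ Fin n =>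
          ∀ x ∈ insert u S, π x = tv x) := by
      intro π hπ
      rw [Finset.mem_filter] at hπ
      obtain ⟨-, hΦ⟩ := hπ
      rw [Finset.mem_filter]
      refine ⟨Finset.mem_univ _, ?_⟩
      intro x hx
      rcases Finset.mem_insert.mp hx with hxu | hxS
      · have h1 : π u = r.1 := congrArg Prod.fst hΦ
        rw [hxu, htvdef]
        simp only [dif_neg huS]
        exact h1
      · have h2 : (fun s : ↥S => π s.1) = r.2 := congrArg Prod.snd hΦ
        have := congrFun h2 ⟨x, hxS⟩
        rw [htvdef]
        simp only [dif_pos hxS]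
        exact this
    have hA : (insert u S).card = dg := by
      rw [Finset.card_insert_of_notMem huS, hScard]
      have : 1 ≤ dg := by
        rw [hdgdef]
        exact Finset.card_pos.mpr ⟨u, huN⟩
      omega
    calc ((Finset.univ.filter fun π : V ≃ Fin n => EvP G π L u w).filter
        fun π => Φ π = r).card ≤ _ := Finset.card_le_card hsub
      _ ≤ Nat.factorial (n - (insert u S).card) := card_fix hn (insert u S) tv
      _ = Nat.factorial (n - dg) := by rw [hA]
  -- count R
  have step4 : R.card ≤ n * Nat.descFactorial (n - 1 - L) (dg - 1) := by
    have hfib : ∀ r ∈ R, r.1 ∈ (Finset.univ : Finset (Fin n)) := fun r _ => Finset.mem_univ _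
    rw [Finset.card_eq_sum_card_fiberwise hfib]
    have hbound : ∀ a : Fin n, (R.filter fun r => r.1 = a).card
        ≤ Nat.descFactorial (n - 1 - L) (dg - 1) := by
      intro a
      rcases le_or_gt ((a : ℕ) + L + 1) n with hge | hlt
      · -- allowed positions
        set allow : Finset (Fin n) :=
          Finset.univ.filter (fun b : Fin n => ¬((a : ℕ) ≤ (b : ℕ) ∧ (b : ℕ) ≤ (a : ℕ) + L))
          with hallowdef
        have hIcard : (Finset.univ.filter
            (fun b : Fin n => (a : ℕ) ≤ (b : ℕ) ∧ (b : ℕ) ≤ (a : ℕ) + L)).card = L + 1 := by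
          have hbij : (Finset.univ.filter
              (fun b : Fin n => (a : ℕ) ≤ (b : ℕ) ∧ (b : ℕ) ≤ (a : ℕ) + L)).card
              = (Finset.Icc (a : ℕ) ((a : ℕ) + L)).card := by
            refine Finset.card_bij (fun b _ => (b : ℕ)) ?_ ?_ ?_
            · intro b hb
              rw [Finset.mem_filter] at hb
              rw [Finset.mem_Icc]
              exact hb.2
            · intro b hb b' hb' hbb
              exact Fin.ext hbb
            · intro k hk
              rw [Finset.mem_Icc] at hk
              refine ⟨⟨k, by omega⟩, ?_, rfl⟩
              rw [Finset.mem_filter]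
              exact ⟨Finset.mem_univ _, hk.1, hk.2⟩
          rw [hbij, Nat.card_Icc]
          omega
        have hallowcard : allow.card = n - 1 - L := by
          rw [hallowdef, Finset.filter_not, Finset.card_sdiff_of_subset (Finset.filter_subset _ _),
            Finset.card_univ, Fintype.card_fin, hIcard]
          omega
        -- inject fibers into embeddings
        have hinj2 : ∀ r ∈ (R.filter fun r => r.1 = a), ∀ s : ↥S, r.2 s ∈ allow := by
          intro r hr s
          rw [Finset.mem_filter] at hr
          obtain ⟨hrR, hra⟩ := hr
          rw [hRdef, Finset.mem_filter] at hrR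
          obtain ⟨-, -, -, h3⟩ := hrR
          rw [hallowdef, Finset.mem_filter]
          refine ⟨Finset.mem_univ _, ?_⟩
          have := h3 s
          rw [hra] at this
          exact this
        rcases (R.filter fun r => r.1 = a).eq_empty_or_nonempty with hem | ⟨r₀, hr₀⟩
        · simp [hem]
        have hr₀inj : Function.Injective r₀.2 := by
          have := (Finset.mem_filter.mp hr₀).1
          rw [hRdef, Finset.mem_filter] at this
          exact this.2.2.1
        set FF : (Fin n × (↥S → Fin n)) → (↥S ↪ ↥allow) := fun r =>
          if h : r ∈ (R.filter fun r => r.1 = a) ∧ Function.Injective r.2 then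
            ⟨fun s => ⟨r.2 s, hinj2 r h.1 s⟩, by
              intro s s' hss
              exact h.2 (congrArg Subtype.val hss)⟩
          else
            ⟨fun s => ⟨r₀.2 s, hinj2 r₀ hr₀ s⟩, by
              intro s s' hss
              exact hr₀inj (congrArg Subtype.val hss)⟩
          with hFFdef
        have hinjOn : Set.InjOn FF ↑(R.filter fun r => r.1 = a) := by
          intro r hr r' hr' hFF2
          rw [Finset.mem_coe, Finset.mem_filter] at hr hr'
          have hri : Function.Injective r.2 := by
            have := hr.1; rw [hRdef, Finset.mem_filter] at this; exact this.2.2.1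
          have hri' : Function.Injective r'.2 := by
            have := hr'.1; rw [hRdef, Finset.mem_filter] at this; exact this.2.2.1
          simp only [hFFdef] at hFF2
          rw [dif_pos ⟨Finset.mem_filter.mpr hr, hri⟩,
            dif_pos ⟨Finset.mem_filter.mpr hr', hri'⟩] at hFF2
          have hsnd : r.2 = r'.2 := by
            funext s
            exact congrArg Subtype.val (DFunLike.congr_fun hFF2 s)
          have hfst : r.1 = r'.1 := by rw [hr.2, hr'.2]
          exact Prod.ext hfst hsnd
        have := Finset.card_le_card_of_injOn
          (s := R.filter fun r => r.1 = a) (t := (Finset.univ : Finset (↥S ↪ ↥allow)))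
          FF (fun r _ => Finset.mem_univ _) hinjOn
        refine this.trans ?_
        rw [Finset.card_univ, Fintype.card_embedding_eq, Fintype.card_coe, Fintype.card_coe,
          hallowcard, hScard]
      · -- a too large : fiber is empty
        have : (R.filter fun r => r.1 = a) = ∅ := by
          rw [Finset.filter_eq_empty_iff]
          intro r hr
          rw [hRdef, Finset.mem_filter] at hr
          intro hra
          have := hr.2.1
          rw [hra] at this
          omega
        simp [this]
    calc ∑ a ∈ (Finset.univ : Finset (Fin n)), (R.filter fun r => r.1 = a).card
        ≤ ∑ a ∈ (Finset.univ : Finset (Fin n)), Nat.descFactorial (n - 1 - L) (dg - 1) :=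
          Finset.sum_le_sum (fun a _ => hbound a)
      _ = n * Nat.descFactorial (n - 1 - L) (dg - 1) := by
          rw [Finset.sum_const, Finset.card_univ, Fintype.card_fin, smul_eq_mul]
  calc (Finset.univ.filter fun π : V ≃ Fin n => EvP G π L u w).card
      = ∑ r ∈ R, ((Finset.univ.filter fun π : V ≃ Fin n => EvP G π L u w).filter
          fun π => Φ π = r).card := step2
    _ ≤ ∑ r ∈ R, Nat.factorial (n - dg) := Finset.sum_le_sum step3
    _ = R.card * Nat.factorial (n - dg) := by rw [Finset.sum_const, smul_eq_mul]
    _ ≤ (n * Nat.descFactorial (n - 1 - L) (dg - 1)) * Nat.factorial (n - dg) :=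
        Nat.mul_le_mul_right _ step4

section MainDev

variable {V : Type*} [Fintype V] [DecidableEq V]

def Wit {V : Type*} (G : SimpleGraph V) {n : ℕ} (π : V ≃ Fin n) (w : V) (p : V × V) : Prop :=
  G.Adj w p.1 ∧ G.Adj w p.2 ∧ ∀ x : V, G.Adj w x → ¬(π p.1 < π x ∧ π x < π p.2)

instance {V : Type*} [Fintype V] (G : SimpleGraph V) [DecidableRel G.Adj] {n : ℕ}
    (π : V ≃ Fin n) (w : V) (p : V × V) : Decidable (Wit G π w p) := by
  unfold Wit; infer_instance

lemma wit_unique {V : Type*} (G : SimpleGraph V) {n : ℕ} (π : V ≃ Fin n) {w u v v' : V}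
    (h1 : Wit G π w (u, v)) (h2 : Wit G π w (u, v'))
    (o1 : π u < π v) (o2 : π u < π v') : v = v' := by
  by_contra hne
  rcases lt_trichotomy (π v) (π v') with h | h | h
  · exact h2.2.2 v h1.2.1 ⟨o1, h⟩
  · exact hne (π.injective h)
  · exact h1.2.2 v' h2.2.1 ⟨o2, h⟩

def PW {V : Type*} [Fintype V] [DecidableEq V] (G : SimpleGraph V) [DecidableRel G.Adj] {n : ℕ}
    (π : V ≃ Fin n) (Ws : Finset V) : Finset (V × V) :=
  Finset.univ.filter fun p => p.1 ≠ p.2 ∧ π p.1 < π p.2 ∧ ∃ w ∈ Ws, Wit G π w p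

lemma mem_PW {G : SimpleGraph V} [DecidableRel G.Adj] {n : ℕ} {π : V ≃ Fin n} {Ws : Finset V}
    {p : V × V} :
    p ∈ PW G π Ws ↔ p.1 ≠ p.2 ∧ π p.1 < π p.2 ∧ ∃ w ∈ Ws, Wit G π w p := by
  unfold PW
  simp only [Finset.mem_filter, Finset.mem_univ, true_and]

lemma ppairs_card_le {n : ℕ} (G : SimpleGraph V) [DecidableRel G.Adj] (π : V ≃ Fin n)
    (Lo Hi : Finset V) (hcover : ∀ w : V, w ∈ Lo ∨ w ∈ Hi) :
    (Ppairs G π).ncard ≤ (PW G π Lo).card + (PW G π Hi).card := by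
  have hset : Ppairs G π = ↑(Finset.univ.filter fun p : V × V =>
      p.1 ≠ p.2 ∧ π p.1 < π p.2 ∧ ∃ w, Wit G π w p) := by
    ext p
    simp [Ppairs, Wit]
  rw [hset, Set.ncard_coe_finset]
  have hsub : (Finset.univ.filter fun p : V × V =>
      p.1 ≠ p.2 ∧ π p.1 < π p.2 ∧ ∃ w, Wit G π w p) ⊆ PW G π Lo ∪ PW G π Hi := by
    intro p hp
    rw [Finset.mem_filter] at hp
    obtain ⟨-, hne, hlt, w, hw⟩ := hp
    rcases hcover w with hwl | hwh
    · exact Finset.mem_union_left _ (mem_PW.mpr ⟨hne, hlt, w, hwl, hw⟩)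
    · exact Finset.mem_union_right _ (mem_PW.mpr ⟨hne, hlt, w, hwh, hw⟩)
  exact (Finset.card_le_card hsub).trans (Finset.card_union_le _ _)

lemma pw_card_le {n : ℕ} (G : SimpleGraph V) [DecidableRel G.Adj] (π : V ≃ Fin n)
    (Ws : Finset V) :
    (PW G π Ws).card ≤ ∑ w ∈ Ws, (Finset.univ.filter (G.Adj w ·)).card := by
  set T : Finset (V × V) := Ws.biUnion (fun w => {w} ×ˢ (Finset.univ.filter (G.Adj w ·)))
    with hTdef
  have hT : T.card ≤ ∑ w ∈ Ws, (Finset.univ.filter (G.Adj w ·)).card := by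
    refine (Finset.card_biUnion_le).trans ?_
    apply Finset.sum_le_sum
    intro w _
    rw [Finset.card_product, Finset.card_singleton, one_mul]
  refine le_trans ?_ hT
  set f : V × V → V × V := fun p =>
    if h : ∃ w ∈ Ws, Wit G π w p then (h.choose, p.1) else (p.1, p.1) with hfdef
  apply Finset.card_le_card_of_injOn f
  · intro p hp
    rw [Finset.mem_coe] at hp ⊢
    rw [mem_PW] at hp
    obtain ⟨hne, hlt, hex⟩ := hp
    rw [hfdef]
    simp only [dif_pos hex]
    obtain ⟨hw1, hw2⟩ := hex.choose_spec
    rw [hTdef]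
    apply Finset.mem_biUnion.mpr
    exact ⟨hex.choose, hw1, Finset.mem_product.mpr
      ⟨Finset.mem_singleton_self _, Finset.mem_filter.mpr ⟨Finset.mem_univ _, hw2.1⟩⟩⟩
  · intro p hp q hq hfpq
    rw [Finset.mem_coe, mem_PW] at hp hq
    obtain ⟨hnep, hltp, hexp⟩ := hp
    obtain ⟨hneq, hltq, hexq⟩ := hq
    rw [hfdef] at hfpq
    simp only [dif_pos hexp, dif_pos hexq] at hfpq
    have h1 : p.1 = q.1 := congrArg Prod.snd hfpq
    have hww : hexp.choose = hexq.choose := congrArg Prod.fst hfpq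
    have hwp := hexp.choose_spec.2
    have hwq := hexq.choose_spec.2
    rw [hww] at hwp
    have h2 : p.2 = q.2 := by
      have hwp' : Wit G π hexq.choose (p.1, p.2) := hwp
      have hwq' : Wit G π hexq.choose (p.1, q.2) := by rw [h1]; exact hwq
      exact wit_unique G π hwp' hwq' hltp (h1 ▸ hltq)
    exact Prod.ext h1 h2

lemma pw_fiber_le {n : ℕ} (G : SimpleGraph V) [DecidableRel G.Adj] (π : V ≃ Fin n)
    (Hi : Finset V) (L : ℕ) (u : V) :
    ((PW G π Hi).filter (fun p => p.1 = u)).card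
      ≤ min ((Finset.univ.filter (G.Adj u ·)).card) L
        + (Hi.filter fun w => G.Adj w u ∧ EvP G π L u w).card := by
  classical
  set Pu := (PW G π Hi).filter (fun p => p.1 = u) with hPudef
  have hcard : Pu.card ≤ (Pu.filter (fun p => (π p.2 : ℕ) ≤ (π u : ℕ) + L)).card
      + (Pu.filter (fun p => ¬ ((π p.2 : ℕ) ≤ (π u : ℕ) + L))).card :=
    le_of_eq (Finset.card_filter_add_card_filter_not
      (s := Pu) (p := fun p : V × V => (π p.2 : ℕ) ≤ (π u : ℕ) + L)).symm
  have hmemPu : ∀ p : V × V, p ∈ Pu →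
      p.1 = u ∧ p.1 ≠ p.2 ∧ π p.1 < π p.2 ∧ ∃ w ∈ Hi, Wit G π w p := by
    intro p hp
    rw [hPudef, Finset.mem_filter, mem_PW] at hp
    exact ⟨hp.2, hp.1⟩
  refine hcard.trans (Nat.add_le_add ?_ ?_)
  · apply Nat.le_min.mpr
    constructor
    · -- inject to neighbours of u
      set f : V × V → V := fun p => if h : ∃ w ∈ Hi, Wit G π w p then h.choose else p.1
        with hfdef
      apply Finset.card_le_card_of_injOn f
      · intro p hp
        rw [Finset.mem_coe] at hp ⊢
        obtain ⟨hp1, hne, hlt, hex⟩ := hmemPu p (Finset.mem_of_mem_filter p hp)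
        rw [hfdef]
        simp only [dif_pos hex]
        have hadj := hex.choose_spec.2.1
        rw [hp1] at hadj
        exact Finset.mem_filter.mpr ⟨Finset.mem_univ _, hadj.symm⟩
      · intro p hp q' hq' hfpq
        rw [Finset.mem_coe] at hp hq'
        obtain ⟨hp1, hnep, hltp, hexp⟩ := hmemPu p (Finset.mem_of_mem_filter p hp)
        obtain ⟨hq1, hneq, hltq, hexq⟩ := hmemPu q' (Finset.mem_of_mem_filter q' hq')
        rw [hfdef] at hfpq
        simp only [dif_pos hexp, dif_pos hexq] at hfpq
        have hwp := hexp.choose_spec.2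
        have hwq := hexq.choose_spec.2
        rw [hfpq] at hwp
        have h2 : p.2 = q'.2 := by
          have hwp' : Wit G π hexq.choose (u, p.2) := by rw [← hp1]; exact hwp
          have hwq' : Wit G π hexq.choose (u, q'.2) := by rw [← hq1]; exact hwq
          exact wit_unique G π hwp' hwq' (hp1 ▸ hltp) (hq1 ▸ hltq)
        exact Prod.ext (hp1.trans hq1.symm) h2
    · -- inject to interval
      have hcard2 : ((Finset.Ioc ((π u : ℕ)) ((π u : ℕ) + L))).card = L := by
        rw [Nat.card_Ioc]; omega
      refine le_trans ?_ (le_of_eq hcard2)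
      apply Finset.card_le_card_of_injOn (fun p => (π p.2 : ℕ))
      · intro p hp
        rw [Finset.mem_coe] at hp ⊢
        rw [Finset.mem_filter] at hp
        obtain ⟨hp1, hne, hlt, -⟩ := hmemPu p hp.1
        rw [Finset.mem_Ioc]
        exact ⟨hp1 ▸ hlt, hp.2⟩
      · intro p hp q' hq' hfpq
        rw [Finset.mem_coe, Finset.mem_filter] at hp hq'
        obtain ⟨hp1, -, -, -⟩ := hmemPu p hp.1
        obtain ⟨hq1, -, -, -⟩ := hmemPu q' hq'.1
        exact Prod.ext (hp1.trans hq1.symm) (π.injective (Fin.ext hfpq))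
  · -- large-gap part
    set f : V × V → V := fun p => if h : ∃ w ∈ Hi, Wit G π w p then h.choose else p.1
      with hfdef
    apply Finset.card_le_card_of_injOn f
    · intro p hp
      rw [Finset.mem_coe] at hp ⊢
      rw [Finset.mem_filter] at hp
      obtain ⟨hp1, hne, hlt, hex⟩ := hmemPu p hp.1
      have hgt : (π u : ℕ) + L < (π p.2 : ℕ) := not_le.mp hp.2
      rw [hfdef]
      simp only [dif_pos hex]
      obtain ⟨hwHi, hwit⟩ := hex.choose_spec
      have hadj : G.Adj hex.choose u := by rw [← hp1]; exact hwit.1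
      refine Finset.mem_filter.mpr ⟨hwHi, hadj, ?_, ?_⟩
      · have h3 : (π p.2 : ℕ) < n := (π p.2).isLt
        omega
      · intro x hx hcon
        apply hwit.2.2 x hx
        constructor
        · rw [hp1]
          exact Fin.lt_def.mpr hcon.1
        · apply Fin.lt_def.mpr
          calc (π x : ℕ) ≤ (π u : ℕ) + L := hcon.2
            _ < (π p.2 : ℕ) := hgt
    · intro p hp q' hq' hfpq
      rw [Finset.mem_coe] at hp hq'
      obtain ⟨hp1, hnep, hltp, hexp⟩ := hmemPu p (Finset.mem_of_mem_filter p hp)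
      obtain ⟨hq1, hneq, hltq, hexq⟩ := hmemPu q' (Finset.mem_of_mem_filter q' hq')
      rw [hfdef] at hfpq
      simp only [dif_pos hexp, dif_pos hexq] at hfpq
      have hwp := hexp.choose_spec.2
      have hwq := hexq.choose_spec.2
      rw [hfpq] at hwp
      have h2 : p.2 = q'.2 := by
        have hwp' : Wit G π hexq.choose (u, p.2) := by rw [← hp1]; exact hwp
        have hwq' : Wit G π hexq.choose (u, q'.2) := by rw [← hq1]; exact hwq
        exact wit_unique G π hwp' hwq' (hp1 ▸ hltp) (hq1 ▸ hltq)
      exact Prod.ext (hp1.trans hq1.symm) h2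

lemma pw_hi_le {n : ℕ} (G : SimpleGraph V) [DecidableRel G.Adj] (π : V ≃ Fin n)
    (Hi : Finset V) (L : ℕ) :
    (PW G π Hi).card
      ≤ (∑ u : V, min ((Finset.univ.filter (G.Adj u ·)).card) L)
        + ∑ w ∈ Hi, (Finset.univ.filter fun x => G.Adj w x ∧ EvP G π L x w).card := by
  have hfib : ∀ p ∈ PW G π Hi, p.1 ∈ (Finset.univ : Finset V) := fun p _ => Finset.mem_univ _
  rw [Finset.card_eq_sum_card_fiberwise hfib]
  have hswap : ∑ u : V, (Hi.filter fun w => G.Adj w u ∧ EvP G π L u w).card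
      = ∑ w ∈ Hi, (Finset.univ.filter fun x => G.Adj w x ∧ EvP G π L x w).card := by
    simp only [Finset.card_filter]
    rw [Finset.sum_comm]
  calc ∑ u : V, ((PW G π Hi).filter (fun p => p.1 = u)).card
      ≤ ∑ u : V, (min ((Finset.univ.filter (G.Adj u ·)).card) L
          + (Hi.filter fun w => G.Adj w u ∧ EvP G π L u w).card) :=
        Finset.sum_le_sum (fun u _ => pw_fiber_le G π Hi L u)
    _ = (∑ u : V, min ((Finset.univ.filter (G.Adj u ·)).card) L)
        + ∑ u : V, (Hi.filter fun w => G.Adj w u ∧ EvP G π L u w).card := by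
        rw [Finset.sum_add_distrib]
    _ = _ := by rw [hswap]

end MainDev

set_option maxHeartbeats 3000000 in
theorem stmt10 {V : Type*} [Fintype V] [DecidableEq V] (G : SimpleGraph V)
    (n : ℕ) (hn : n = Fintype.card V) (h2 : 2 ≤ n)
    (d : Fin n → ℕ) (hmono : Monotone d) (e : Fin n ≃ V)
    (hd : ∀ i : Fin n, d i = Nat.card (G.neighborSet (e i)))
    (t : Fin n) (hdt : 1 ≤ d t) :
    (∑ π : V ≃ Fin n, ((Ppairs G π).ncard : ℝ)) / (Nat.factorial n) ≤
      4 * n + 2 * (∑ i ∈ Finset.univ.filter (fun i : Fin n => i < t), (d i : ℝ)) +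
        ((n : ℝ) - (t.val + 1)) * n * Real.log n / d t := by
  letI : DecidableRel G.Adj := Classical.decRel _
  letI : DecidableEq (V ≃ Fin n) := Classical.decEq _
  set D := d t with hDdef
  have hD1 : 1 ≤ D := hdt
  set dgF : V → ℕ := fun w => (Finset.univ.filter (G.Adj w ·)).card with hdgFdef
  have hdeg : ∀ i : Fin n, d i = dgF (e i) := by
    intro i
    rw [hd i]
    have hset : G.neighborSet (e i) = ↑(Finset.univ.filter (G.Adj (e i) ·)) := by
      ext x; simp [SimpleGraph.mem_neighborSet]
    rw [hset, Nat.card_coe_set_eq, Set.ncard_coe_finset]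
  set Lo := (Finset.univ.filter (fun i : Fin n => i < t)).image e with hLodef
  set Hi := (Finset.univ.filter (fun i : Fin n => t ≤ i)).image e with hHidef
  have hcover : ∀ w : V, w ∈ Lo ∨ w ∈ Hi := by
    intro w
    rcases lt_or_ge (e.symm w) t with h | h
    · exact Or.inl (Finset.mem_image.mpr ⟨e.symm w,
        Finset.mem_filter.mpr ⟨Finset.mem_univ _, h⟩, e.apply_symm_apply w⟩)
    · exact Or.inr (Finset.mem_image.mpr ⟨e.symm w,
        Finset.mem_filter.mpr ⟨Finset.mem_univ _, h⟩, e.apply_symm_apply w⟩)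
  have hdisj : Disjoint Lo Hi := by
    rw [Finset.disjoint_left]
    intro w hwl hwh
    obtain ⟨i, hi, hei⟩ := Finset.mem_image.mp hwl
    obtain ⟨j, hj, hej⟩ := Finset.mem_image.mp hwh
    have : i = j := e.injective (hei.trans hej.symm)
    rw [Finset.mem_filter] at hi hj
    subst this
    exact absurd hj.2 (not_le.mpr hi.2)
  have hunion : Lo ∪ Hi = Finset.univ := by
    apply Finset.eq_univ_of_forall
    intro w
    exact Finset.mem_union.mpr (hcover w)
  set m := n - t.val with hmdef
  have htn : t.val < n := t.isLt
  have hm1 : 1 ≤ m := by omega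
  have hmn : m ≤ n := by omega
  have hHicard : Hi.card = m := by
    rw [hHidef, Finset.card_image_of_injective _ e.injective]
    have : (Finset.univ.filter (fun i : Fin n => t ≤ i)) = Finset.Ici t := by
      ext i; simp
    rw [this, Fin.card_Ici]
  have hHideg : ∀ w ∈ Hi, D ≤ dgF w ∧ dgF w ≤ n - 1 := by
    intro w hw
    obtain ⟨i, hi, hei⟩ := Finset.mem_image.mp hw
    rw [Finset.mem_filter] at hi
    constructor
    · rw [← hei, ← hdeg i]
      exact hmono hi.2
    · rw [hdgFdef]
      have hsub : Finset.univ.filter (G.Adj w ·) ⊆ Finset.univ.erase w := by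
        intro x hx
        rw [Finset.mem_filter] at hx
        exact Finset.mem_erase.mpr ⟨(G.ne_of_adj hx.2).symm, Finset.mem_univ _⟩
      calc (Finset.univ.filter (G.Adj w ·)).card ≤ (Finset.univ.erase w).card :=
            Finset.card_le_card hsub
        _ = n - 1 := by rw [Finset.card_erase_of_mem (Finset.mem_univ w),
            Finset.card_univ, ← hn]
  set Slow := ∑ i ∈ Finset.univ.filter (fun i : Fin n => i < t), d i with hSlowdef
  have hLosum : ∑ w ∈ Lo, dgF w = Slow := by
    rw [hLodef, Finset.sum_image (fun i _ j _ hij => e.injective hij)]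
    exact Finset.sum_congr rfl (fun i _ => (hdeg i).symm)
  have hNfact : Fintype.card (V ≃ Fin n) = Nat.factorial n := by
    rw [Fintype.card_equiv e.symm, ← hn]
  have hfactpos : (0:ℝ) < (Nat.factorial n : ℝ) := by
    exact_mod_cast Nat.factorial_pos n
  have hPWLo : ∀ π : V ≃ Fin n, (PW G π Lo).card ≤ Slow :=
    fun π => le_of_le_of_eq (pw_card_le G π Lo) hLosum
  have hnR : (0:ℝ) < (n:ℝ) := by positivity
  have hDR : (0:ℝ) < (D:ℝ) := by exact_mod_cast hD1
  have hlognn : (0:ℝ) ≤ Real.log n := Real.log_natCast_nonneg n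
  have hmcast : (m:ℝ) = (n:ℝ) - t.val := by
    rw [hmdef, Nat.cast_sub htn.le]
  have hRHS : ((n : ℝ) - (t.val + 1)) * n * Real.log n / d t
      = ((m:ℝ) - 1) * ((n:ℝ) * Real.log n / D) := by
    rw [hmcast, ← hDdef]
    ring
  have hSlowR : (Slow : ℝ) = ∑ i ∈ Finset.univ.filter (fun i : Fin n => i < t), (d i : ℝ) := by
    rw [hSlowdef]
    push_cast
    rfl
  rw [hRHS, ← hSlowR]
  have hm1R : (1:ℝ) ≤ (m:ℝ) := by exact_mod_cast hm1
  have hmnR : (m:ℝ) ≤ (n:ℝ) := by exact_mod_cast hmn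
  by_cases hcase : (n:ℝ) * Real.log n / D < (n:ℝ) - 1
  · -- CASE B
    set L := Nat.ceil (((n:ℝ) - 1) * Real.log n / D) with hLdef
    -- min-sum bound
    have hminsum : (∑ u : V, min (dgF u) L) ≤ Slow + m * L := by
      rw [← hunion, Finset.sum_union hdisj]
      apply Nat.add_le_add
      · calc ∑ u ∈ Lo, min (dgF u) L ≤ ∑ u ∈ Lo, dgF u :=
              Finset.sum_le_sum (fun u _ => Nat.min_le_left _ _)
          _ = Slow := hLosum
      · calc ∑ u ∈ Hi, min (dgF u) L ≤ ∑ u ∈ Hi, L :=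
              Finset.sum_le_sum (fun u _ => Nat.min_le_right _ _)
          _ = m * L := by rw [Finset.sum_const, hHicard, smul_eq_mul]
    -- pointwise bound
    have hpoint : ∀ π : V ≃ Fin n, ((Ppairs G π).ncard : ℝ)
        ≤ ((2 * Slow + m * L : ℕ) : ℝ)
          + ((∑ w ∈ Hi, (Finset.univ.filter fun x => G.Adj w x ∧ EvP G π L x w).card : ℕ) : ℝ) := by
      intro π
      have h1 := ppairs_card_le G π Lo Hi hcover
      have h2 := pw_hi_le G π Hi L
      have h3 : (Ppairs G π).ncard ≤ 2 * Slow + m * L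
          + ∑ w ∈ Hi, (Finset.univ.filter fun x => G.Adj w x ∧ EvP G π L x w).card := by
        calc (Ppairs G π).ncard ≤ (PW G π Lo).card + (PW G π Hi).card := h1
          _ ≤ Slow + ((∑ u : V, min (dgF u) L)
              + ∑ w ∈ Hi, (Finset.univ.filter fun x => G.Adj w x ∧ EvP G π L x w).card) :=
            Nat.add_le_add (hPWLo π) h2
          _ ≤ Slow + ((Slow + m * L)
              + ∑ w ∈ Hi, (Finset.univ.filter fun x => G.Adj w x ∧ EvP G π L x w).card) := by
            apply Nat.add_le_add_left
            exact Nat.add_le_add_right hminsum _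
          _ = 2 * Slow + m * L
              + ∑ w ∈ Hi, (Finset.univ.filter fun x => G.Adj w x ∧ EvP G π L x w).card := by ring
      calc ((Ppairs G π).ncard : ℝ) ≤ ((2 * Slow + m * L
          + ∑ w ∈ Hi, (Finset.univ.filter fun x => G.Adj w x ∧ EvP G π L x w).card : ℕ) : ℝ) := by
            exact_mod_cast h3
        _ = _ := by push_cast; ring
    -- Z bound
    have hZ : (∑ π : V ≃ Fin n,
        ((∑ w ∈ Hi, (Finset.univ.filter fun x => G.Adj w x ∧ EvP G π L x w).card : ℕ) : ℝ))
        ≤ 2 * m * (Nat.factorial n : ℝ) := by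
      have hswap : ∑ π : V ≃ Fin n,
          (∑ w ∈ Hi, (Finset.univ.filter fun x => G.Adj w x ∧ EvP G π L x w).card)
          = ∑ w ∈ Hi, ∑ π : V ≃ Fin n,
            (Finset.univ.filter fun x => G.Adj w x ∧ EvP G π L x w).card :=
        Finset.sum_comm
      have hperw : ∀ w ∈ Hi, ((∑ π : V ≃ Fin n,
          (Finset.univ.filter fun x => G.Adj w x ∧ EvP G π L x w).card : ℕ) : ℝ)
          ≤ 2 * (Nat.factorial n : ℝ) := by
        intro w hw
        obtain ⟨hDw, hwn⟩ := hHideg w hw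
        set CB := n * Nat.descFactorial (n - 1 - L) (dgF w - 1)
          * Nat.factorial (n - dgF w) with hCBdef
        have hEq : ∀ π : V ≃ Fin n,
            (Finset.univ.filter fun x => G.Adj w x ∧ EvP G π L x w)
            = (Finset.univ.filter (G.Adj w ·)).filter (fun x => EvP G π L x w) := by
          intro π
          rw [Finset.filter_filter]
        have hsum1 : (∑ π : V ≃ Fin n,
            (Finset.univ.filter fun x => G.Adj w x ∧ EvP G π L x w).card)
            = ∑ x ∈ Finset.univ.filter (G.Adj w ·),
                (Finset.univ.filter fun π : V ≃ Fin n => EvP G π L x w).card := by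
          calc (∑ π : V ≃ Fin n,
              (Finset.univ.filter fun x => G.Adj w x ∧ EvP G π L x w).card)
              = ∑ π : V ≃ Fin n, ∑ x ∈ Finset.univ.filter (G.Adj w ·),
                  (if EvP G π L x w then 1 else 0) := by
                apply Finset.sum_congr rfl
                intro π _
                rw [hEq π, Finset.card_filter]
            _ = ∑ x ∈ Finset.univ.filter (G.Adj w ·), ∑ π : V ≃ Fin n,
                  (if EvP G π L x w then 1 else 0) := Finset.sum_comm
            _ = _ := by
                apply Finset.sum_congr rfl
                intro x _
                rw [Finset.card_filter]
        have hxbound : ∀ x ∈ Finset.univ.filter (G.Adj w ·),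
            (Finset.univ.filter fun π : V ≃ Fin n => EvP G π L x w).card ≤ CB := by
          intro x hx
          rw [Finset.mem_filter] at hx
          exact card_Ev hn G L x w hx.2
        have hsum2 : (∑ π : V ≃ Fin n,
            (Finset.univ.filter fun x => G.Adj w x ∧ EvP G π L x w).card) ≤ dgF w * CB := by
          rw [hsum1]
          calc ∑ x ∈ Finset.univ.filter (G.Adj w ·),
              (Finset.univ.filter fun π : V ≃ Fin n => EvP G π L x w).card
              ≤ ∑ x ∈ Finset.univ.filter (G.Adj w ·), CB := Finset.sum_le_sum hxbound
            _ = dgF w * CB := by rw [Finset.sum_const, smul_eq_mul, hdgFdef]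
        have haux := aux_real n (dgF w) D L h2 hD1 hDw hwn hcase hLdef
        calc ((∑ π : V ≃ Fin n,
            (Finset.univ.filter fun x => G.Adj w x ∧ EvP G π L x w).card : ℕ) : ℝ)
            ≤ ((dgF w * CB : ℕ) : ℝ) := by exact_mod_cast hsum2
          _ = (dgF w : ℝ) * ((CB : ℕ) : ℝ) := by push_cast; ring
          _ ≤ 2 * (Nat.factorial n : ℝ) := haux
      calc (∑ π : V ≃ Fin n,
          ((∑ w ∈ Hi, (Finset.univ.filter fun x => G.Adj w x ∧ EvP G π L x w).card : ℕ) : ℝ))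
          = ((∑ w ∈ Hi, ∑ π : V ≃ Fin n,
              (Finset.univ.filter fun x => G.Adj w x ∧ EvP G π L x w).card : ℕ) : ℝ) := by
            rw [← hswap]; push_cast; rfl
        _ = ∑ w ∈ Hi, ((∑ π : V ≃ Fin n,
              (Finset.univ.filter fun x => G.Adj w x ∧ EvP G π L x w).card : ℕ) : ℝ) := by
            push_cast; rfl
        _ ≤ ∑ w ∈ Hi, 2 * (Nat.factorial n : ℝ) := Finset.sum_le_sum hperw
        _ = 2 * m * (Nat.factorial n : ℝ) := by
            rw [Finset.sum_const, hHicard, nsmul_eq_mul]; ring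
    -- combine
    have htotal : (∑ π : V ≃ Fin n, ((Ppairs G π).ncard : ℝ))
        ≤ (Nat.factorial n : ℝ) * ((2 * Slow + m * L : ℕ) : ℝ) + 2 * m * (Nat.factorial n : ℝ) := by
      calc (∑ π : V ≃ Fin n, ((Ppairs G π).ncard : ℝ))
          ≤ ∑ π : V ≃ Fin n, (((2 * Slow + m * L : ℕ) : ℝ)
            + ((∑ w ∈ Hi, (Finset.univ.filter fun x => G.Adj w x ∧ EvP G π L x w).card : ℕ) : ℝ)) :=
            Finset.sum_le_sum (fun π _ => hpoint π)
        _ = (∑ _π : V ≃ Fin n, ((2 * Slow + m * L : ℕ) : ℝ))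
            + ∑ π : V ≃ Fin n,
              ((∑ w ∈ Hi, (Finset.univ.filter fun x => G.Adj w x ∧ EvP G π L x w).card : ℕ) : ℝ) :=
            Finset.sum_add_distrib
        _ ≤ (Nat.factorial n : ℝ) * ((2 * Slow + m * L : ℕ) : ℝ) + 2 * m * (Nat.factorial n : ℝ) := by
            apply add_le_add _ hZ
            rw [Finset.sum_const, Finset.card_univ, hNfact, nsmul_eq_mul]
    -- final arithmetic
    rw [div_le_iff₀ hfactpos]
    have hfinal : ((2 * Slow + m * L : ℕ) : ℝ) + 2 * m
        ≤ 4 * n + 2 * (Slow:ℝ) + ((m:ℝ) - 1) * ((n:ℝ) * Real.log n / D) := by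
      push_cast
      have hL1 : (L:ℝ) ≤ ((n:ℝ) - 1) * Real.log n / D + 1 := by
        rw [hLdef]
        have hnn : (0:ℝ) ≤ ((n:ℝ) - 1) * Real.log n / D := by
          apply div_nonneg (mul_nonneg (by linarith) hlognn) hDR.le
        exact (Nat.ceil_lt_add_one hnn).le
      have hX1 : Real.log n / D ≤ 1 := by
        by_contra hcon
        push_neg at hcon
        have : (n:ℝ) * 1 < (n:ℝ) * (Real.log n / D) := by
          apply mul_lt_mul_of_pos_left hcon hnR
        rw [mul_one] at this
        have h5 : (n:ℝ) * (Real.log n / D) = (n:ℝ) * Real.log n / D := by ring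
        rw [h5] at this
        linarith
      have f1 : (m:ℝ) * (L:ℝ) ≤ (m:ℝ) * (((n:ℝ) - 1) * (Real.log n / D)) + m := by
        have h6 := mul_le_mul_of_nonneg_left hL1 (by linarith : (0:ℝ) ≤ (m:ℝ))
        have h7 : (m:ℝ) * (((n:ℝ) - 1) * Real.log n / D + 1)
            = (m:ℝ) * (((n:ℝ) - 1) * (Real.log n / D)) + m := by ring
        linarith
      have f2 : ((n:ℝ) - (m:ℝ)) * (Real.log n / D) ≤ (n:ℝ) - (m:ℝ) := by
        have := mul_le_mul_of_nonneg_left hX1 (by linarith : (0:ℝ) ≤ (n:ℝ) - (m:ℝ))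
        linarith
      have e3 : (m:ℝ) * (((n:ℝ) - 1) * (Real.log n / D))
          = ((m:ℝ) - 1) * ((n:ℝ) * Real.log n / D) + ((n:ℝ) - (m:ℝ)) * (Real.log n / D) := by
        ring
      nlinarith [f1, f2, e3, hmnR, hnR]
    calc (∑ π : V ≃ Fin n, ((Ppairs G π).ncard : ℝ))
        ≤ (Nat.factorial n : ℝ) * ((2 * Slow + m * L : ℕ) : ℝ) + 2 * m * (Nat.factorial n : ℝ) :=
          htotal
      _ = (((2 * Slow + m * L : ℕ) : ℝ) + 2 * m) * (Nat.factorial n : ℝ) := by ring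
      _ ≤ (4 * n + 2 * (Slow:ℝ) + ((m:ℝ) - 1) * ((n:ℝ) * Real.log n / D))
          * (Nat.factorial n : ℝ) := by
          apply mul_le_mul_of_nonneg_right hfinal hfactpos.le
  · -- CASE A
    push_neg at hcase
    have hZempty : ∀ (w : V) (π : V ≃ Fin n),
        (Finset.univ.filter fun x => G.Adj w x ∧ EvP G π n x w) = ∅ := by
      intro w π
      rw [Finset.filter_eq_empty_iff]
      intro x _
      rintro ⟨-, h1, -⟩
      have := (π x).isLt
      omega
    have hminsum : (∑ u : V, min (dgF u) n) ≤ Slow + m * (n - 1) := by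
      rw [← hunion, Finset.sum_union hdisj]
      apply Nat.add_le_add
      · calc ∑ u ∈ Lo, min (dgF u) n ≤ ∑ u ∈ Lo, dgF u :=
              Finset.sum_le_sum (fun u _ => Nat.min_le_left _ _)
          _ = Slow := hLosum
      · calc ∑ u ∈ Hi, min (dgF u) n ≤ ∑ u ∈ Hi, (n - 1) := by
              apply Finset.sum_le_sum
              intro u hu
              exact le_trans (Nat.min_le_left _ _) (hHideg u hu).2
          _ = m * (n - 1) := by rw [Finset.sum_const, hHicard, smul_eq_mul]
    have hpoint : ∀ π : V ≃ Fin n, (Ppairs G π).ncard ≤ 2 * Slow + m * (n - 1) := by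
      intro π
      have h1 := ppairs_card_le G π Lo Hi hcover
      have h2 := pw_hi_le G π Hi n
      calc (Ppairs G π).ncard ≤ (PW G π Lo).card + (PW G π Hi).card := h1
        _ ≤ Slow + ((∑ u : V, min (dgF u) n)
            + ∑ w ∈ Hi, (Finset.univ.filter fun x => G.Adj w x ∧ EvP G π n x w).card) :=
          Nat.add_le_add (hPWLo π) h2
        _ = Slow + (∑ u : V, min (dgF u) n) := by
            have : ∑ w ∈ Hi, (Finset.univ.filter fun x => G.Adj w x ∧ EvP G π n x w).card
                = 0 := by
              apply Finset.sum_eq_zero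
              intro w _
              rw [hZempty w π, Finset.card_empty]
            rw [this, Nat.add_zero]
        _ ≤ Slow + (Slow + m * (n-1)) := Nat.add_le_add_left hminsum _
        _ = 2 * Slow + m * (n - 1) := by ring
    rw [div_le_iff₀ hfactpos]
    have hfinal : ((2 * Slow + m * (n - 1) : ℕ) : ℝ)
        ≤ 4 * n + 2 * (Slow:ℝ) + ((m:ℝ) - 1) * ((n:ℝ) * Real.log n / D) := by
      have hcast : ((2 * Slow + m * (n - 1) : ℕ) : ℝ)
          = 2 * (Slow:ℝ) + (m:ℝ) * ((n:ℝ) - 1) := by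
        push_cast [Nat.cast_sub (by omega : 1 ≤ n)]
        ring
      rw [hcast]
      have h8 : ((m:ℝ) - 1) * ((n:ℝ) - 1) ≤ ((m:ℝ) - 1) * ((n:ℝ) * Real.log n / D) := by
        apply mul_le_mul_of_nonneg_left hcase (by linarith)
      nlinarith [h8, hnR, hm1R, hmnR]
    calc (∑ π : V ≃ Fin n, ((Ppairs G π).ncard : ℝ))
        ≤ ∑ _π : V ≃ Fin n, ((2 * Slow + m * (n - 1) : ℕ) : ℝ) := by
          apply Finset.sum_le_sum
          intro π _
          exact_mod_cast hpoint π
      _ = (Nat.factorial n : ℝ) * ((2 * Slow + m * (n - 1) : ℕ) : ℝ) := by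
          rw [Finset.sum_const, Finset.card_univ, hNfact, nsmul_eq_mul]
      _ ≤ (Nat.factorial n : ℝ)
          * (4 * n + 2 * (Slow:ℝ) + ((m:ℝ) - 1) * ((n:ℝ) * Real.log n / D)) := by
          apply mul_le_mul_of_nonneg_left hfinal hfactpos.le
      _ = (4 * n + 2 * (Slow:ℝ) + ((m:ℝ) - 1) * ((n:ℝ) * Real.log n / D))
          * (Nat.factorial n : ℝ) := by ring
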